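/- Under the standing non-degeneracy hypotheses, the constant C(a) of the previous lemma satisfies the conjugation symmetry conj(C(a)) = (−1)^{a1+a2} · C(a) for every a = (a1,a2) ∈ ℤ², where C(a) := −(i/(2π))·Δ^{−1} · Σ_{ω=±} (β_{−ω}/β_ω) · exp(i p^ω·a) + ((1−a2)/(2π)) · J(a), with J(a) := ∫_{p1⁻}^{p1⁺+2π} exp(iθ a1) · (K1 + K2 exp(iθ))^{a2−2} · (−K3 exp(iθ) − K4)^{−a2} dθ if a2 ≤ 0, and J(a) := −∫_{p1⁺}^{p1⁻} exp(iθ a1) · (K1 + K2 exp(iθ))^{a2−2} · (−K3 exp(iθ) − K4)^{−a2} dθ if a2 ≥ 1. -/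

import Mathlib

open Complex Real MeasureTheory ComplexConjugate

/-- The characteristic polynomial of the non-interacting dimer model. -/
noncomputable def mu (t1 t2 t3 : ℝ) (k : ℝ × ℝ) : ℂ :=
  (t1 : ℂ) + Complex.I * (t2 : ℂ) * Complex.exp (Complex.I * (k.1 : ℂ))
    - (t3 : ℂ) * Complex.exp (Complex.I * ((k.1 : ℂ) + (k.2 : ℂ)))
    - Complex.I * Complex.exp (Complex.I * (k.2 : ℂ))

/-- The boundary integral `J(a)` appearing in the constant `C(a)`; here `K₁ = t₁`, `K₂ = i t₂`,
`K₃ = −t₃`, `K₄ = −i`, so `−K₃ e^{iθ} − K₄ = t₃ e^{iθ} + i`. -/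
noncomputable def Jint (t1 t2 t3 : ℝ) (p1plus p1minus : ℝ) (a : ℤ × ℤ) : ℂ :=
  if a.2 ≤ 0 then
    ∫ θ in p1minus..(p1plus + 2 * π),
      Complex.exp (Complex.I * (θ : ℂ) * (a.1 : ℂ))
        * ((t1 : ℂ) + Complex.I * (t2 : ℂ) * Complex.exp (Complex.I * (θ : ℂ))) ^ (a.2 - 2)
        * ((t3 : ℂ) * Complex.exp (Complex.I * (θ : ℂ)) + Complex.I) ^ (-a.2)
  else
    -∫ θ in p1plus..p1minus,
      Complex.exp (Complex.I * (θ : ℂ) * (a.1 : ℂ))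
        * ((t1 : ℂ) + Complex.I * (t2 : ℂ) * Complex.exp (Complex.I * (θ : ℂ))) ^ (a.2 - 2)
        * ((t3 : ℂ) * Complex.exp (Complex.I * (θ : ℂ)) + Complex.I) ^ (-a.2)

/-- The constant `C(a)`: `C(a) = −(i/(2π)) Δ⁻¹ Σ_ω (β₋ω/βω) e^{i pω·a} + ((1−a₂)/(2π)) J(a)`. -/
noncomputable def Cconst (t1 t2 t3 : ℝ) (pplus pminus : ℝ × ℝ) (αp αm βp βm : ℂ)
    (a : ℤ × ℤ) : ℂ :=
  -(Complex.I / (2 * π)) * (αp * βm - αm * βp)⁻¹ *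
      ((βm / βp) * Complex.exp (Complex.I * ((pplus.1 : ℂ) * (a.1 : ℂ) + (pplus.2 : ℂ) * (a.2 : ℂ)))
        + (βp / βm) * Complex.exp (Complex.I * ((pminus.1 : ℂ) * (a.1 : ℂ) + (pminus.2 : ℂ) * (a.2 : ℂ))))
    + (((1 - a.2 : ℤ) : ℂ) / (2 * π)) * Jint t1 t2 t3 pplus.1 pminus.1 a

/-- The set `2πℤ²` of lattice translations. -/
def twoPiLattice : Set (ℝ × ℝ) := {x | ∃ m n : ℤ, x = (2 * π * m, 2 * π * n)}

/-! ### Auxiliary lemmas -/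

/-- The integrand of `Jint`, as a standalone function. -/
noncomputable def fInt (t1 t2 t3 : ℝ) (a : ℤ × ℤ) (θ : ℝ) : ℂ :=
  Complex.exp (Complex.I * (θ : ℂ) * (a.1 : ℂ))
    * ((t1 : ℂ) + Complex.I * (t2 : ℂ) * Complex.exp (Complex.I * (θ : ℂ))) ^ (a.2 - 2)
    * ((t3 : ℂ) * Complex.exp (Complex.I * (θ : ℂ)) + Complex.I) ^ (-a.2)

lemma fInt_conj (t1 t2 t3 : ℝ) (a : ℤ × ℤ) (θ : ℝ) :
    (starRingEnd ℂ) (fInt t1 t2 t3 a θ) = (-1 : ℂ) ^ (a.1 + a.2) * fInt t1 t2 t3 a (π - θ) := by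
  have hE : Complex.exp (Complex.I * ((π - θ : ℝ) : ℂ))
      = -(starRingEnd ℂ) (Complex.exp (Complex.I * (θ : ℂ))) := by
    rw [← Complex.exp_conj]
    have h1 : (starRingEnd ℂ) (Complex.I * (θ : ℂ)) = -(Complex.I * (θ : ℂ)) := by
      simp [Complex.conj_I]
    rw [h1, show Complex.I * ((π - θ : ℝ) : ℂ) = π * Complex.I + -(Complex.I * (θ:ℂ)) by
      push_cast; ring, Complex.exp_add, Complex.exp_pi_mul_I]
    ring
  have hE1 : Complex.exp (Complex.I * ((π - θ : ℝ) : ℂ) * (a.1 : ℂ))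
      = (-1 : ℂ) ^ a.1 * (starRingEnd ℂ) (Complex.exp (Complex.I * (θ : ℂ) * (a.1 : ℂ))) := by
    rw [← Complex.exp_conj]
    have h1 : (starRingEnd ℂ) (Complex.I * (θ:ℂ) * (a.1:ℂ)) = -(Complex.I * (θ:ℂ) * (a.1:ℂ)) := by
      simp [Complex.conj_I]
    rw [h1, show Complex.I * ((π - θ : ℝ):ℂ) * (a.1:ℂ)
        = (a.1 : ℂ) * (π * Complex.I) + -(Complex.I * (θ:ℂ) * (a.1:ℂ)) by push_cast; ring,
      Complex.exp_add, Complex.exp_int_mul, Complex.exp_pi_mul_I]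
  have hsign : (-1 : ℂ) ^ (a.1 + a.2) * ((-1 : ℂ) ^ a.1 * (-1 : ℂ) ^ (-a.2)) = 1 := by
    rw [← zpow_add₀ (by norm_num : (-1:ℂ) ≠ 0), ← zpow_add₀ (by norm_num : (-1:ℂ) ≠ 0),
      show a.1 + a.2 + (a.1 + -a.2) = 2 * a.1 by ring, zpow_mul]
    norm_num
  have hA : ((t1 : ℂ) + Complex.I * (t2 : ℂ) * Complex.exp (Complex.I * ((π - θ : ℝ):ℂ)))
      = (starRingEnd ℂ) ((t1 : ℂ) + Complex.I * (t2 : ℂ) * Complex.exp (Complex.I * (θ:ℂ))) := by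
    rw [hE]; simp [Complex.conj_I]
  have hB : ((t3 : ℂ) * Complex.exp (Complex.I * ((π - θ : ℝ):ℂ)) + Complex.I)
      = -(starRingEnd ℂ) ((t3 : ℂ) * Complex.exp (Complex.I * (θ:ℂ)) + Complex.I) := by
    rw [hE]; simp [Complex.conj_I]; ring
  simp only [fInt, map_mul, map_zpow₀]
  rw [hE1, hA, hB, show -(starRingEnd ℂ) ((t3 : ℂ) * Complex.exp (Complex.I * (θ:ℂ)) + Complex.I)
      = (-1 : ℂ) * (starRingEnd ℂ) ((t3 : ℂ) * Complex.exp (Complex.I * (θ:ℂ)) + Complex.I) by ring,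
    mul_zpow]
  calc (starRingEnd ℂ) (Complex.exp (Complex.I * (θ:ℂ) * (a.1:ℂ)))
        * (starRingEnd ℂ) ((t1:ℂ) + Complex.I * (t2:ℂ) * Complex.exp (Complex.I * (θ:ℂ))) ^ (a.2 - 2)
        * (starRingEnd ℂ) ((t3:ℂ) * Complex.exp (Complex.I * (θ:ℂ)) + Complex.I) ^ (-a.2)
      = ((-1 : ℂ) ^ (a.1 + a.2) * ((-1 : ℂ) ^ a.1 * (-1 : ℂ) ^ (-a.2)))
        * ((starRingEnd ℂ) (Complex.exp (Complex.I * (θ:ℂ) * (a.1:ℂ)))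
          * (starRingEnd ℂ) ((t1:ℂ) + Complex.I * (t2:ℂ) * Complex.exp (Complex.I * (θ:ℂ))) ^ (a.2 - 2)
          * (starRingEnd ℂ) ((t3:ℂ) * Complex.exp (Complex.I * (θ:ℂ)) + Complex.I) ^ (-a.2)) := by
        rw [hsign, one_mul]
    _ = _ := by ring

lemma fInt_periodic (t1 t2 t3 : ℝ) (a : ℤ × ℤ) (θ : ℝ) :
    fInt t1 t2 t3 a (θ - 2 * π) = fInt t1 t2 t3 a θ := by
  have h1 : Complex.exp (Complex.I * ((θ - 2 * π : ℝ) : ℂ)) = Complex.exp (Complex.I * (θ:ℂ)) := by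
    rw [show Complex.I * ((θ - 2*π : ℝ):ℂ) = Complex.I * (θ:ℂ) + ((-1 : ℤ) : ℂ) * (2*π*Complex.I) by
      push_cast; ring, Complex.exp_add, Complex.exp_int_mul_two_pi_mul_I, mul_one]
  have h2 : Complex.exp (Complex.I * ((θ - 2 * π : ℝ):ℂ) * (a.1:ℂ))
      = Complex.exp (Complex.I * (θ:ℂ) * (a.1:ℂ)) := by
    rw [show Complex.I * ((θ - 2*π : ℝ):ℂ) * (a.1:ℂ)
        = Complex.I * (θ:ℂ) * (a.1:ℂ) + ((-a.1 : ℤ) : ℂ) * (2*π*Complex.I) by push_cast; ring,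
      Complex.exp_add, Complex.exp_int_mul_two_pi_mul_I, mul_one]
  simp only [fInt, h1, h2]

lemma Jint_conj (t1 t2 t3 : ℝ) (p1p p1m : ℝ) (h : p1m = π - p1p) (a : ℤ × ℤ) :
    (starRingEnd ℂ) (Jint t1 t2 t3 p1p p1m a)
      = (-1 : ℂ) ^ (a.1 + a.2) * Jint t1 t2 t3 p1p p1m a := by
  have hconjInt : ∀ s t : ℝ, (starRingEnd ℂ) (∫ θ in s..t, fInt t1 t2 t3 a θ)
      = ∫ θ in s..t, (starRingEnd ℂ) (fInt t1 t2 t3 a θ) := fun s t => by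
    simp only [intervalIntegral, ← integral_conj, map_sub]
  have key : ∀ s t : ℝ, (starRingEnd ℂ) (∫ θ in s..t, fInt t1 t2 t3 a θ)
      = (-1 : ℂ) ^ (a.1 + a.2) * ∫ θ in (π - t)..(π - s), fInt t1 t2 t3 a θ := fun s t => by
    rw [hconjInt]
    simp only [fInt_conj]
    rw [intervalIntegral.integral_const_mul, intervalIntegral.integral_comp_sub_left
      (fun θ => fInt t1 t2 t3 a θ) π]
  by_cases h2 : a.2 ≤ 0
  · simp only [Jint, if_pos h2]
    rw [show (∫ θ in p1m..(p1p + 2*π), Complex.exp (Complex.I * (θ:ℂ) * (a.1:ℂ))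
        * ((t1:ℂ) + Complex.I * (t2:ℂ) * Complex.exp (Complex.I * (θ:ℂ))) ^ (a.2 - 2)
        * ((t3:ℂ) * Complex.exp (Complex.I * (θ:ℂ)) + Complex.I) ^ (-a.2))
        = ∫ θ in p1m..(p1p + 2*π), fInt t1 t2 t3 a θ by rfl, key]
    congr 1
    have hshift : (∫ θ in p1m..(p1p + 2*π), fInt t1 t2 t3 a (θ - 2*π))
        = ∫ θ in (p1m - 2*π)..(p1p + 2*π - 2*π), fInt t1 t2 t3 a θ :=
      intervalIntegral.integral_comp_sub_right (fun θ => fInt t1 t2 t3 a θ) (2*π)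
    simp only [fInt_periodic] at hshift
    rw [hshift]
    congr 1 <;> linarith
  · simp only [Jint, if_neg h2]
    rw [show (∫ θ in p1p..p1m, Complex.exp (Complex.I * (θ:ℂ) * (a.1:ℂ))
        * ((t1:ℂ) + Complex.I * (t2:ℂ) * Complex.exp (Complex.I * (θ:ℂ))) ^ (a.2 - 2)
        * ((t3:ℂ) * Complex.exp (Complex.I * (θ:ℂ)) + Complex.I) ^ (-a.2))
        = ∫ θ in p1p..p1m, fInt t1 t2 t3 a θ by rfl, map_neg, key]
    rw [show π - p1m = p1p by linarith, show π - p1p = p1m by linarith]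
    ring

lemma hd_exp (p : ℝ) : HasDerivAt (fun x : ℝ => Complex.exp (Complex.I * (x:ℂ)))
    (Complex.I * Complex.exp (Complex.I * (p:ℂ))) p := by
  have h : HasDerivAt (fun z : ℂ => Complex.exp (Complex.I * z))
      (Complex.exp (Complex.I * (p:ℂ)) * Complex.I) (p : ℂ) := by
    simpa using ((hasDerivAt_id (p:ℂ)).const_mul Complex.I).cexp
  simpa [mul_comm] using h.comp_ofReal

lemma hd_exp_add_right (q p : ℝ) :
    HasDerivAt (fun x : ℝ => Complex.exp (Complex.I * ((x:ℂ) + (q:ℂ))))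
      (Complex.I * Complex.exp (Complex.I * ((p:ℂ) + (q:ℂ)))) p := by
  have h : HasDerivAt (fun z : ℂ => Complex.exp (Complex.I * (z + (q:ℂ))))
      (Complex.exp (Complex.I * ((p:ℂ) + (q:ℂ))) * Complex.I) (p : ℂ) := by
    simpa using (((hasDerivAt_id (p:ℂ)).add_const (q:ℂ)).const_mul Complex.I).cexp
  simpa [mul_comm] using h.comp_ofReal

lemma hd_exp_add_left (p q : ℝ) :
    HasDerivAt (fun y : ℝ => Complex.exp (Complex.I * ((p:ℂ) + (y:ℂ))))
      (Complex.I * Complex.exp (Complex.I * ((p:ℂ) + (q:ℂ)))) q := by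
  have h : HasDerivAt (fun z : ℂ => Complex.exp (Complex.I * ((p:ℂ) + z)))
      (Complex.exp (Complex.I * ((p:ℂ) + (q:ℂ))) * Complex.I) (q : ℂ) := by
    simpa using (((hasDerivAt_id (q:ℂ)).const_add (p:ℂ)).const_mul Complex.I).cexp
  simpa [mul_comm] using h.comp_ofReal

lemma mu_deriv_fst (t1 t2 t3 q p : ℝ) :
    deriv (fun x : ℝ => mu t1 t2 t3 (x, q)) p
      = Complex.I * (t2:ℂ) * (Complex.I * Complex.exp (Complex.I * (p:ℂ)))
        - (t3:ℂ) * (Complex.I * Complex.exp (Complex.I * ((p:ℂ) + (q:ℂ)))) := by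
  have H : HasDerivAt (fun x : ℝ => mu t1 t2 t3 (x, q))
      (Complex.I * (t2:ℂ) * (Complex.I * Complex.exp (Complex.I * (p:ℂ)))
        - (t3:ℂ) * (Complex.I * Complex.exp (Complex.I * ((p:ℂ) + (q:ℂ))))) p := by
    have h := (((hasDerivAt_const p (t1:ℂ)).add
        ((hd_exp p).const_mul (Complex.I * (t2:ℂ)))).sub
        ((hd_exp_add_right q p).const_mul (t3:ℂ))).sub
        (hasDerivAt_const p (Complex.I * Complex.exp (Complex.I * (q:ℂ))))
    simpa [mu, mul_assoc, Pi.add_def, Pi.sub_def] using h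
  exact H.deriv

lemma mu_deriv_snd (t1 t2 t3 p q : ℝ) :
    deriv (fun y : ℝ => mu t1 t2 t3 (p, y)) q
      = -((t3:ℂ) * (Complex.I * Complex.exp (Complex.I * ((p:ℂ) + (q:ℂ)))))
        - Complex.I * (Complex.I * Complex.exp (Complex.I * (q:ℂ))) := by
  have H : HasDerivAt (fun y : ℝ => mu t1 t2 t3 (p, y))
      (-((t3:ℂ) * (Complex.I * Complex.exp (Complex.I * ((p:ℂ) + (q:ℂ)))))
        - Complex.I * (Complex.I * Complex.exp (Complex.I * (q:ℂ)))) q := by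
    have h := (((hasDerivAt_const q ((t1:ℂ) + Complex.I * (t2:ℂ)
          * Complex.exp (Complex.I * (p:ℂ)))).sub
        ((hd_exp_add_left p q).const_mul (t3:ℂ))).sub
        ((hd_exp q).const_mul Complex.I))
    simpa [mu, mul_assoc, Pi.add_def, Pi.sub_def] using h
  exact H.deriv

/-- Algebraic conjugation identity for the oscillatory (first) part of `C(a)`. -/
lemma T1_conj (s Δ βp βm Ep Em : ℂ) (x : ℝ)
    (hcd : (starRingEnd ℂ) Δ = -Δ)
    (hcb : (starRingEnd ℂ) βp = -βm) (hcb' : (starRingEnd ℂ) βm = -βp)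
    (hcEp : (starRingEnd ℂ) Ep = s * Em) (hcEm : (starRingEnd ℂ) Em = s * Ep) :
    (starRingEnd ℂ) (-(Complex.I / (2 * (x:ℂ))) * Δ⁻¹ * (βm / βp * Ep + βp / βm * Em))
      = s * (-(Complex.I / (2 * (x:ℂ))) * Δ⁻¹ * (βm / βp * Ep + βp / βm * Em)) := by
  rw [map_mul, map_mul, map_inv₀, hcd, map_add, map_mul, map_mul, map_div₀, map_div₀,
    hcb, hcb', hcEp, hcEm, map_neg, map_div₀, Complex.conj_I, map_mul, map_ofNat,
    Complex.conj_ofReal, inv_neg, neg_div_neg_eq, neg_div_neg_eq]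
  ring

/-- Conjugation symmetry of the constant `C(a)`: `conj (C(a)) = (−1)^{a₁+a₂} C(a)`. -/
theorem Cconst_conj_symmetry (t1 t2 t3 : ℝ) (ht1 : 0 < t1) (ht2 : 0 < t2) (ht3 : 0 < t3)
    (h12 : t1 ≠ t2) (h31 : t3 ≠ 1)
    (pplus : ℝ × ℝ) (hzero : mu t1 t2 t3 pplus = 0) (hcos : 0 < Real.cos pplus.1)
    (pminus : ℝ × ℝ) (hpm : pminus = (π - pplus.1, π - pplus.2))
    (hzeros : ∀ k : ℝ × ℝ, mu t1 t2 t3 k = 0 ↔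
      ((∃ x ∈ twoPiLattice, k = pplus + x) ∨ (∃ x ∈ twoPiLattice, k = pminus + x)))
    (hlow : ∃ c > 0, ∀ k : ℝ × ℝ,
      c * min (Metric.infDist (k - pplus) twoPiLattice)
              (Metric.infDist (k - pminus) twoPiLattice)
        ≤ ‖mu t1 t2 t3 k‖)
    (αp αm βp βm : ℂ)
    (hαp : αp = deriv (fun x : ℝ => mu t1 t2 t3 (x, pplus.2)) pplus.1)
    (hβp : βp = deriv (fun y : ℝ => mu t1 t2 t3 (pplus.1, y)) pplus.2)
    (hαm : αm = deriv (fun x : ℝ => mu t1 t2 t3 (x, pminus.2)) pminus.1)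
    (hβm : βm = deriv (fun y : ℝ => mu t1 t2 t3 (pminus.1, y)) pminus.2)
    (hbp : βp ≠ 0) (hbm : βm ≠ 0) (hΔ : αp * βm - αm * βp ≠ 0)
    (a : ℤ × ℤ) :
    conj (Cconst t1 t2 t3 pplus pminus αp αm βp βm a)
      = (-1 : ℂ) ^ (a.1 + a.2) * Cconst t1 t2 t3 pplus pminus αp αm βp βm a := by
  subst hpm
  dsimp only at hαm hβm
  rw [mu_deriv_fst] at hαp hαm
  rw [mu_deriv_snd] at hβp hβm
  -- basic sign facts
  have hs : (-1:ℂ) ^ (a.1 + a.2) * (-1:ℂ) ^ (a.1 + a.2) = 1 := by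
    rw [← zpow_add₀ (by norm_num : (-1:ℂ) ≠ 0),
      show (a.1 + a.2) + (a.1 + a.2) = 2 * (a.1 + a.2) by ring, zpow_mul]
    norm_num
  have hconj_s : (starRingEnd ℂ) ((-1:ℂ) ^ (a.1 + a.2)) = (-1:ℂ) ^ (a.1 + a.2) := by
    rw [map_zpow₀]; norm_num
  -- conjugation of the basic exponentials
  have hem1 : Complex.exp (Complex.I * ((π - pplus.1 : ℝ):ℂ))
      = -(starRingEnd ℂ) (Complex.exp (Complex.I * (pplus.1:ℂ))) := by
    rw [← Complex.exp_conj, show (starRingEnd ℂ) (Complex.I * (pplus.1:ℂ))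
        = -(Complex.I * (pplus.1:ℂ)) by simp [Complex.conj_I],
      show Complex.I * ((π - pplus.1 : ℝ):ℂ) = π * Complex.I + -(Complex.I * (pplus.1:ℂ)) by
        push_cast; ring, Complex.exp_add, Complex.exp_pi_mul_I]
    ring
  have hem2 : Complex.exp (Complex.I * ((π - pplus.2 : ℝ):ℂ))
      = -(starRingEnd ℂ) (Complex.exp (Complex.I * (pplus.2:ℂ))) := by
    rw [← Complex.exp_conj, show (starRingEnd ℂ) (Complex.I * (pplus.2:ℂ))
        = -(Complex.I * (pplus.2:ℂ)) by simp [Complex.conj_I],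
      show Complex.I * ((π - pplus.2 : ℝ):ℂ) = π * Complex.I + -(Complex.I * (pplus.2:ℂ)) by
        push_cast; ring, Complex.exp_add, Complex.exp_pi_mul_I]
    ring
  have hem12 : Complex.exp (Complex.I * (((π - pplus.1 : ℝ):ℂ) + ((π - pplus.2 : ℝ):ℂ)))
      = (starRingEnd ℂ) (Complex.exp (Complex.I * ((pplus.1:ℂ) + (pplus.2:ℂ)))) := by
    rw [← Complex.exp_conj, show (starRingEnd ℂ) (Complex.I * ((pplus.1:ℂ) + (pplus.2:ℂ)))
        = -(Complex.I * ((pplus.1:ℂ) + (pplus.2:ℂ))) by simp [Complex.conj_I],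
      show Complex.I * (((π - pplus.1 : ℝ):ℂ) + ((π - pplus.2 : ℝ):ℂ))
        = ((1:ℤ):ℂ) * (2 * π * Complex.I) + -(Complex.I * ((pplus.1:ℂ) + (pplus.2:ℂ))) by
        push_cast; ring, Complex.exp_add, Complex.exp_int_mul_two_pi_mul_I, one_mul]
  -- conjugation of the derivatives
  have hca : (starRingEnd ℂ) αp = -αm := by
    rw [hαp, hαm, hem1, hem12]
    simp only [map_sub, map_mul, Complex.conj_I, Complex.conj_ofReal]
    ring
  have hcb : (starRingEnd ℂ) βp = -βm := by
    rw [hβp, hβm, hem2, hem12]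
    simp only [map_sub, map_mul, map_neg, Complex.conj_I, Complex.conj_ofReal]
    ring
  have hca' : (starRingEnd ℂ) αm = -αp := by
    have h := congrArg (starRingEnd ℂ) hca
    simp only [Complex.conj_conj, map_neg] at h
    linear_combination h
  have hcb' : (starRingEnd ℂ) βm = -βp := by
    have h := congrArg (starRingEnd ℂ) hcb
    simp only [Complex.conj_conj, map_neg] at h
    linear_combination h
  have hcd : (starRingEnd ℂ) (αp * βm - αm * βp) = -(αp * βm - αm * βp) := by
    simp only [map_sub, map_mul, hca, hca', hcb, hcb']
    ring
  -- conjugation of the plane-wave factors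
  have hEm : Complex.exp (Complex.I * (((π - pplus.1 : ℝ):ℂ) * (a.1:ℂ) + ((π - pplus.2 : ℝ):ℂ) * (a.2:ℂ)))
      = (-1:ℂ) ^ (a.1 + a.2)
        * (starRingEnd ℂ) (Complex.exp (Complex.I * ((pplus.1:ℂ) * (a.1:ℂ) + (pplus.2:ℂ) * (a.2:ℂ)))) := by
    rw [← Complex.exp_conj,
      show (starRingEnd ℂ) (Complex.I * ((pplus.1:ℂ) * (a.1:ℂ) + (pplus.2:ℂ) * (a.2:ℂ)))
        = -(Complex.I * ((pplus.1:ℂ) * (a.1:ℂ) + (pplus.2:ℂ) * (a.2:ℂ))) by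
        simp [Complex.conj_I],
      show Complex.I * (((π - pplus.1 : ℝ):ℂ) * (a.1:ℂ) + ((π - pplus.2 : ℝ):ℂ) * (a.2:ℂ))
        = ((a.1 + a.2 : ℤ):ℂ) * (π * Complex.I)
          + -(Complex.I * ((pplus.1:ℂ) * (a.1:ℂ) + (pplus.2:ℂ) * (a.2:ℂ))) by push_cast; ring,
      Complex.exp_add, Complex.exp_int_mul, Complex.exp_pi_mul_I]
  have hcEp : (starRingEnd ℂ) (Complex.exp (Complex.I * ((pplus.1:ℂ) * (a.1:ℂ) + (pplus.2:ℂ) * (a.2:ℂ))))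
      = (-1:ℂ) ^ (a.1 + a.2)
        * Complex.exp (Complex.I * (((π - pplus.1 : ℝ):ℂ) * (a.1:ℂ) + ((π - pplus.2 : ℝ):ℂ) * (a.2:ℂ))) := by
    rw [hEm, ← mul_assoc, hs, one_mul]
  have hcEm : (starRingEnd ℂ) (Complex.exp (Complex.I * (((π - pplus.1 : ℝ):ℂ) * (a.1:ℂ) + ((π - pplus.2 : ℝ):ℂ) * (a.2:ℂ))))
      = (-1:ℂ) ^ (a.1 + a.2)
        * Complex.exp (Complex.I * ((pplus.1:ℂ) * (a.1:ℂ) + (pplus.2:ℂ) * (a.2:ℂ))) := by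
    rw [hEm, map_mul, hconj_s, Complex.conj_conj]
  -- assemble
  simp only [Cconst]
  rw [map_add]
  rw [T1_conj ((-1:ℂ) ^ (a.1 + a.2)) (αp * βm - αm * βp) βp βm _ _ π hcd hcb hcb' hcEp hcEm]
  rw [map_mul, Jint_conj t1 t2 t3 pplus.1 (π - pplus.1) rfl a, map_div₀, map_intCast,
    map_mul, map_ofNat, Complex.conj_ofReal]
  ring
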